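/- arXiv:2107.02223 — 5 statements merged into one kernel-verified Lean document; each statement's English description precedes it below -/
import Mathlib

section
/- Let M be a Hadamard manifold and △ := {(x,x) : x ∈ M}. The function b : M × (M \ △) × M → ℝ given by b(x, z, y) = b_{γ_{x,z}}(y), where γ_{x,z} is the geodesic ray starting at x and passing through z and b_{γ_{x,z}} is its Busemann function, is upper semicontinuous. -/
open Set Filter

universe u v

/-- An axiomatic model of an `n`-dimensional Hadamard manifold: a complete (proper) metric
space `M` (with `dist` the Riemannian distance) in which every pair of points `x, y` is joined
by a unique minimizing geodesic `geo x y : ℝ → M` (`geo x y t = exp_x (t • exp_x⁻¹ y)`),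
satisfying the nonpositive-curvature comparison inequalities, in which every pair of distinct
points `z, x` determines a unique unit-speed geodesic ray `ray z x` starting at `z` and passing
through `x`, and in which, for each point `x`, the exponential map
`exp x : T_xM ≃ ℝⁿ → M` is a homeomorphism with inverse `log x` satisfying
`dist x y = ‖log x y‖`, jointly continuous in the footpoint (the tangent bundle `TM` with its
Sasaki metric being globally trivialized as `M × ℝⁿ`). Euclidean space `ℝⁿ` is a model, so the
axioms are consistent. -/
class Hadamard (n : ℕ) (M : Type u) extends MetricSpace M where
  geo : M → M → ℝ → M
  geo_zero : ∀ x y : M, geo x y 0 = x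
  geo_one : ∀ x y : M, geo x y 1 = y
  geo_dist : ∀ x y : M, ∀ s ∈ Set.Icc (0:ℝ) 1, ∀ t ∈ Set.Icc (0:ℝ) 1,
    dist (geo x y s) (geo x y t) = |s - t| * dist x y
  geo_unique : ∀ x y z : M, ∀ t ∈ Set.Icc (0:ℝ) 1,
    dist x z = t * dist x y → dist z y = (1 - t) * dist x y → z = geo x y t
  dist_convex : ∀ x y x' y' : M, ∀ t ∈ Set.Icc (0:ℝ) 1,
    dist (geo x y t) (geo x' y' t) ≤ (1 - t) * dist x x' + t * dist y y'
  cn_ineq : ∀ x y p : M, ∀ t ∈ Set.Icc (0:ℝ) 1,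
    dist (geo x y t) p ^ 2 ≤
      (1 - t) * dist x p ^ 2 + t * dist y p ^ 2 - t * (1 - t) * dist x y ^ 2
  ray : M → M → ℝ → M
  ray_zero : ∀ z x : M, z ≠ x → ray z x 0 = z
  ray_through : ∀ z x : M, z ≠ x → ray z x (dist z x) = x
  ray_isom : ∀ z x : M, z ≠ x → ∀ s ∈ Set.Ici (0:ℝ), ∀ t ∈ Set.Ici (0:ℝ),
    dist (ray z x s) (ray z x t) = |s - t|
  exp : M → EuclideanSpace ℝ (Fin n) → M
  log : M → M → EuclideanSpace ℝ (Fin n)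
  exp_log : ∀ x y : M, exp x (log x y) = y
  log_exp : ∀ (x : M) (v : EuclideanSpace ℝ (Fin n)), log x (exp x v) = v
  dist_log : ∀ x y : M, dist x y = ‖log x y‖
  exp_continuous : Continuous fun p : M × EuclideanSpace ℝ (Fin n) => exp p.1 p.2
  geo_exp : ∀ (x y : M) (t : ℝ), geo x y t = exp x (t • log x y)
  properSpace : ProperSpace M

/-- A set `D` in a Hadamard manifold is convex if for any `x, y ∈ D` the geodesic segment
`γ_{x,y}([0,1])` is contained in `D`. -/
def GConvex (n : ℕ) {M : Type u} [Hadamard n M] (D : Set M) : Prop :=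
  ∀ x ∈ D, ∀ y ∈ D, ∀ t ∈ Set.Icc (0:ℝ) 1, Hadamard.geo n x y t ∈ D

/-- A function `f` is convex on a convex set `D` if
`f (γ_{x,y}(t)) ≤ (1 - t) * f x + t * f y` for all `x, y ∈ D`, `t ∈ [0,1]`. -/
def GConvexOn (n : ℕ) {M : Type u} [Hadamard n M] (D : Set M) (f : M → ℝ) : Prop :=
  ∀ x ∈ D, ∀ y ∈ D, ∀ t ∈ Set.Icc (0:ℝ) 1,
    f (Hadamard.geo n x y t) ≤ (1 - t) * f x + t * f y

/-- The convex hull of `B`: the smallest convex subset of `M` containing `B`. -/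
def ghull (n : ℕ) {M : Type u} [Hadamard n M] (B : Set M) : Set M :=
  ⋂₀ {C : Set M | GConvex n C ∧ B ⊆ C}

/-- The Busemann function of the geodesic ray starting at `z` and passing through `x`,
evaluated at `y`:  `b_{γ_{z,x}}(y) = lim_{t → ∞} (d (y, γ_{z,x}(t)) - t)`
(junk value if the limit does not exist, e.g. if `z = x`). -/
noncomputable def busemann (n : ℕ) {M : Type u} [Hadamard n M] (z x y : M) : ℝ :=
  limUnder atTop fun t : ℝ => dist y (Hadamard.ray n z x t) - t

section Aux

open Topology

variable {n : ℕ} {M : Type u} [Hadamard n M]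

/-- The "inverse exponential map" `log` is jointly continuous. -/
lemma hadamard_log_continuous :
    Continuous fun p : M × M => Hadamard.log (n := n) p.1 p.2 := by
  rw [continuous_iff_seqContinuous]
  intro u a hu
  set v : ℕ → EuclideanSpace ℝ (Fin n) := fun k => Hadamard.log (n := n) (u k).1 (u k).2 with hv
  have h1 : Tendsto (fun k => (u k).1) atTop (𝓝 a.1) :=
    (continuous_fst.tendsto a).comp hu
  have h2 : Tendsto (fun k => (u k).2) atTop (𝓝 a.2) :=
    (continuous_snd.tendsto a).comp hu
  have hnorm : Tendsto (fun k => ‖v k‖) atTop (𝓝 (dist a.1 a.2)) := by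
    simp only [hv, ← Hadamard.dist_log]
    exact h1.dist h2
  obtain ⟨R, hR⟩ := hnorm.bddAbove_range
  have hRb : ∀ k, ‖v k‖ ≤ R := fun k => hR ⟨k, rfl⟩
  have hcpt : IsCompact (Metric.closedBall (0 : EuclideanSpace ℝ (Fin n)) R) :=
    isCompact_closedBall _ _
  apply tendsto_of_subseq_tendsto
  intro ns hns
  have hmem : ∀ k, v (ns k) ∈ Metric.closedBall (0 : EuclideanSpace ℝ (Fin n)) R := by
    intro k; rw [Metric.mem_closedBall, dist_zero_right]; exact hRb _
  obtain ⟨w, -, ms, hmono, hconv⟩ := hcpt.tendsto_subseq hmem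
  have h1' : Tendsto (fun k => (u (ns (ms k))).1) atTop (𝓝 a.1) :=
    h1.comp (hns.comp hmono.tendsto_atTop)
  have h2' : Tendsto (fun k => (u (ns (ms k))).2) atTop (𝓝 a.2) :=
    h2.comp (hns.comp hmono.tendsto_atTop)
  have hexp : Tendsto (fun k => Hadamard.exp (n := n) (u (ns (ms k))).1 (v (ns (ms k)))) atTop
      (𝓝 (Hadamard.exp (n := n) a.1 w)) := by
    have := (Hadamard.exp_continuous (n := n) (M := M)).tendsto (a.1, w)
    exact this.comp (h1'.prodMk_nhds hconv)
  have hexp' : ∀ k, Hadamard.exp (n := n) (u (ns (ms k))).1 (v (ns (ms k))) = (u (ns (ms k))).2 := by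
    intro k; simp only [hv, Hadamard.exp_log]
  rw [funext hexp'] at hexp
  have hw : Hadamard.exp (n := n) a.1 w = a.2 := tendsto_nhds_unique hexp h2'
  have hwl : w = Hadamard.log (n := n) a.1 a.2 := by
    rw [← hw, Hadamard.log_exp]
  exact ⟨ms, by simpa [Function.comp_def, hv, ← hwl] using hconv⟩

/-- The ray through `z` and `x` is given by the (rescaled) geodesic `geo z x`. -/
lemma hadamard_ray_eq_geo (z x : M) (h : z ≠ x) {t : ℝ} (ht : 0 ≤ t) :
    Hadamard.ray n z x t = Hadamard.geo n z x (t / dist z x) := by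
  set d : ℝ := dist z x with hd
  have hd0 : 0 < d := dist_pos.2 h
  have hdz : ∀ s : ℝ, 0 ≤ s → dist z (Hadamard.ray n z x s) = s := by
    intro s hs
    have := Hadamard.ray_isom (n := n) z x h 0 self_mem_Ici s (mem_Ici.2 hs)
    rw [Hadamard.ray_zero z x h] at this
    rw [this, abs_of_nonpos (by linarith), neg_sub, sub_zero]
  rcases le_or_gt t d with hle | hgt
  · -- `t ≤ d` : the ray point lies between `z` and `x`.
    refine Hadamard.geo_unique z x _ (t / d) (mem_Icc.2 ⟨by positivity, by
      rw [div_le_one hd0]; exact hle⟩) ?_ ?_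
    · rw [hdz t ht, div_mul_cancel₀ _ hd0.ne']
    · have := Hadamard.ray_isom (n := n) z x h t (mem_Ici.2 ht) d (mem_Ici.2 hd0.le)
      rw [Hadamard.ray_through z x h] at this
      rw [this, abs_of_nonpos (by linarith)]
      field_simp
      rw [← hd]; ring
  · -- `t > d` : `x` lies between `z` and the ray point.
    have ht0 : 0 < t := lt_trans hd0 hgt
    set w : M := Hadamard.ray n z x t with hw
    have hzw : dist z w = t := hdz t ht
    have hxw : dist x w = t - d := by
      have := Hadamard.ray_isom (n := n) z x h d (mem_Ici.2 hd0.le) t (mem_Ici.2 ht)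
      rw [Hadamard.ray_through z x h] at this
      rw [this, abs_of_nonpos (by linarith), neg_sub]
    have hx : x = Hadamard.geo n z w (d / t) := by
      refine Hadamard.geo_unique z w x (d / t) (mem_Icc.2 ⟨by positivity, by
        rw [div_le_one ht0]; exact hgt.le⟩) ?_ ?_
      · rw [hzw, div_mul_cancel₀ _ ht0.ne']
      · rw [hzw, hxw]; field_simp
    have hlog : Hadamard.log (n := n) z x = (d / t) • Hadamard.log (n := n) z w := by
      conv_lhs => rw [hx, Hadamard.geo_exp, Hadamard.log_exp]
    have hlog' : (t / d) • Hadamard.log (n := n) z x = Hadamard.log (n := n) z w := by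
      rw [hlog, smul_smul, show t / d * (d / t) = 1 by field_simp, one_smul]
    rw [Hadamard.geo_exp, hlog', Hadamard.exp_log]

/-- The function in the definition of the Busemann function is antitone in `t ≥ 0`. -/
lemma hadamard_busemann_fun_antitone (z x y : M) (h : z ≠ x) :
    ∀ s : ℝ, 0 ≤ s → ∀ t : ℝ, 0 ≤ t → s ≤ t →
      dist y (Hadamard.ray n z x t) - t ≤ dist y (Hadamard.ray n z x s) - s := by
  intro s hs t ht hst
  have htri := dist_triangle y (Hadamard.ray n z x s) (Hadamard.ray n z x t)
  have hiso := Hadamard.ray_isom (n := n) z x h s (mem_Ici.2 hs) t (mem_Ici.2 ht)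
  rw [hiso, abs_of_nonpos (by linarith), neg_sub] at htri
  linarith

/-- The function in the definition of the Busemann function is bounded below for `t ≥ 0`. -/
lemma hadamard_busemann_fun_bddBelow (z x y : M) (h : z ≠ x) :
    ∀ t : ℝ, 0 ≤ t → -(dist z y) ≤ dist y (Hadamard.ray n z x t) - t := by
  intro t ht
  have hdz : dist z (Hadamard.ray n z x t) = t := by
    have := Hadamard.ray_isom (n := n) z x h 0 self_mem_Ici t (mem_Ici.2 ht)
    rw [Hadamard.ray_zero z x h] at this
    rw [this, abs_of_nonpos (by linarith), neg_sub, sub_zero]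
  have := dist_triangle z y (Hadamard.ray n z x t)
  rw [hdz] at this
  linarith

lemma hadamard_busemann_bddBelow (z x y : M) (h : z ≠ x) :
    BddBelow (range fun t : Ici (0:ℝ) => dist y (Hadamard.ray n z x t) - (t : ℝ)) := by
  refine ⟨-(dist z y), ?_⟩
  rintro r ⟨⟨t, ht⟩, rfl⟩
  exact hadamard_busemann_fun_bddBelow z x y h t ht

/-- The Busemann function equals the infimum over `t ≥ 0`. -/
lemma hadamard_busemann_eq (z x y : M) (h : z ≠ x) :
    busemann n z x y = ⨅ t : Ici (0:ℝ), (dist y (Hadamard.ray n z x t) - (t : ℝ)) := by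
  have hanti : Antitone fun t : Ici (0:ℝ) => dist y (Hadamard.ray n z x t) - (t : ℝ) := by
    rintro ⟨s, hs⟩ ⟨t, ht⟩ hst
    exact hadamard_busemann_fun_antitone z x y h s hs t ht hst
  have hbdd := hadamard_busemann_bddBelow (n := n) z x y h
  have htend := tendsto_atTop_ciInf hanti hbdd
  have htend' : Tendsto (fun t : ℝ => dist y (Hadamard.ray n z x t) - t) atTop
      (𝓝 (⨅ t : Ici (0:ℝ), (dist y (Hadamard.ray n z x t) - (t : ℝ)))) := by
    rw [← map_val_Ici_atTop (0:ℝ), tendsto_map'_iff]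
    exact htend
  exact htend'.limUnder_eq

lemma hadamard_busemann_le (z x y : M) (h : z ≠ x) {t : ℝ} (ht : 0 ≤ t) :
    busemann n z x y ≤ dist y (Hadamard.ray n z x t) - t := by
  rw [hadamard_busemann_eq z x y h]
  exact ciInf_le (hadamard_busemann_bddBelow (n := n) z x y h) ⟨t, ht⟩

end Aux

/-- In a Hadamard manifold `M`, the function
`b(x, z, y) = b_{γ_{x,z}}(y)` (the Busemann function of the geodesic ray starting at `x`
and passing through `z`, evaluated at `y`) is upper semicontinuous on
`M × (M \ △) × M`, i.e. on the set of triples `(x, z, y)` with `x ≠ z`. -/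
theorem busemann_upperSemicontinuous {n : ℕ} {M : Type u} [Hadamard n M] :
    UpperSemicontinuousOn (fun p : M × M × M => busemann n p.1 p.2.1 p.2.2)
      {p : M × M × M | p.1 ≠ p.2.1} := by
  intro p hp c hc
  have hp' : p.1 ≠ p.2.1 := hp
  have hc' : busemann n p.1 p.2.1 p.2.2 < c := hc
  rw [hadamard_busemann_eq p.1 p.2.1 p.2.2 hp'] at hc'
  obtain ⟨⟨t₀, ht₀⟩, hlt⟩ := exists_lt_of_ciInf_lt hc'
  -- `hlt : dist p.2.2 (ray p.1 p.2.1 t₀) - t₀ < c`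
  set s : Set (M × M × M) := {p : M × M × M | p.1 ≠ p.2.1} with hs
  set F : M × M × M → ℝ := fun q => dist q.2.2 (Hadamard.ray n q.1 q.2.1 t₀) - t₀ with hF
  have hcont : ContinuousOn F s := by
    set G : M × M × M → ℝ := fun q =>
      dist q.2.2 (Hadamard.exp (n := n) q.1 ((t₀ / dist q.1 q.2.1) • Hadamard.log (n := n) q.1 q.2.1)) - t₀
      with hG
    have hGcont : ContinuousOn G s := by
      have hd : ContinuousOn (fun q : M × M × M => t₀ / dist q.1 q.2.1) s := by
        apply continuousOn_const.div
          (Continuous.continuousOn (by fun_prop : Continuous fun q : M × M × M =>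
            dist q.1 q.2.1))
        intro q hq
        exact dist_ne_zero.2 hq
      have hlog : Continuous fun q : M × M × M => Hadamard.log (n := n) q.1 q.2.1 := by
        have := (hadamard_log_continuous (n := n) (M := M))
        exact this.comp (by fun_prop : Continuous fun q : M × M × M => (q.1, q.2.1))
      have hsmul : ContinuousOn (fun q : M × M × M =>
          (t₀ / dist q.1 q.2.1) • Hadamard.log (n := n) q.1 q.2.1) s :=
        hd.smul hlog.continuousOn
      have hexp : ContinuousOn (fun q : M × M × M =>
          Hadamard.exp (n := n) q.1 ((t₀ / dist q.1 q.2.1) • Hadamard.log (n := n) q.1 q.2.1)) s := by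
        have hec := (Hadamard.exp_continuous (n := n) (M := M))
        exact hec.comp_continuousOn (continuous_fst.continuousOn.prodMk hsmul)
      exact (continuous_dist.comp_continuousOn ((continuous_snd.snd.continuousOn).prodMk hexp)).sub continuousOn_const
    refine hGcont.congr ?_
    intro q hq
    have hq' : q.1 ≠ q.2.1 := hq
    simp only [hF, hG]
    rw [hadamard_ray_eq_geo q.1 q.2.1 hq' ht₀, Hadamard.geo_exp]
  have hFev : ∀ᶠ q in nhdsWithin p s, F q < c := by
    have := hcont p hp
    exact this (Iio_mem_nhds hlt)
  filter_upwards [hFev, self_mem_nhdsWithin] with q hq1 hq2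
  exact lt_of_le_of_lt (hadamard_busemann_le _ _ _ hq2 ht₀) hq1
end

section
/- Let M be a Hadamard manifold, D ⊆ M a nonempty convex set, and f : D → ℝ a convex function. For any N ∈ ℕ, points x_1, …, x_N ∈ D and weights α_1, …, α_N ≥ 0 with ∑_{i=1}^N α_i = 1, the pseudo-convex combination y_N = ∑_{i=1}^N α_i x_i satisfies the Jensen inequality f(∑_{i=1}^N α_i x_i) ≤ ∑_{i=1}^N α_i f(x_i). -/
open Set Filter

universe u v

/-- The pseudo-convex combination `∑_{i=1}^{N} α_i x_i` (with points and weights indexed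
from `0`): `y_0 = x_0` and `y_k = γ_{y_{k-1}, x_k}(α_k / (α_0 + ⋯ + α_k))`, with the
convention that the parameter is `0` when the denominator vanishes.  The combination of
`x_1, …, x_N` of the paper is `pcc n x α (N - 1)`. -/
noncomputable def pcc (n : ℕ) {M : Type u} [Hadamard n M] (x : ℕ → M) (α : ℕ → ℝ) :
    ℕ → M
  | 0 => x 0
  | k + 1 =>
      Hadamard.geo n (pcc n x α k) (x (k + 1))
        (if (∑ i ∈ Finset.range (k + 2), α i) = 0 then 0
         else α (k + 1) / ∑ i ∈ Finset.range (k + 2), α i)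

/-- **Jensen's inequality for pseudo-convex combinations.**
Let `M` be a Hadamard manifold, `D ⊆ M` nonempty convex, and `f : D → ℝ` convex. For any
`N ≥ 1`, points `x_0, …, x_{N-1} ∈ D` and weights `α_i ≥ 0` with `∑ α_i = 1`, the
pseudo-convex combination `y_N = ∑ α_i x_i` satisfies
`f (∑ α_i x_i) ≤ ∑ α_i f(x_i)`. -/
theorem jensen_pcc {n : ℕ} {M : Type u} [Hadamard n M]
    {D : Set M} (hne : D.Nonempty) (hD : GConvex n D)
    {f : M → ℝ} (hf : GConvexOn n D f)
    {N : ℕ} (hN : 0 < N) (x : ℕ → M) (hx : ∀ i < N, x i ∈ D)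
    (α : ℕ → ℝ) (hα : ∀ i < N, 0 ≤ α i)
    (hsum : ∑ i ∈ Finset.range N, α i = 1) :
    f (pcc n x α (N - 1)) ≤ ∑ i ∈ Finset.range N, α i * f (x i) := by
  -- Main induction
  have key : ∀ k, (∀ i ≤ k, x i ∈ D) → (∀ i ≤ k, 0 ≤ α i) →
      pcc n x α k ∈ D ∧
      (∑ i ∈ Finset.range (k + 1), α i) * f (pcc n x α k) ≤
        ∑ i ∈ Finset.range (k + 1), α i * f (x i) := by
    intro k
    induction k with
    | zero =>
      intro hxD hα0
      refine ⟨hxD 0 le_rfl, ?_⟩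
      simp [pcc]
    | succ k ih =>
      intro hxD hα0
      obtain ⟨hmem, hineq⟩ := ih (fun i hi => hxD i (hi.trans (Nat.le_succ k)))
        (fun i hi => hα0 i (hi.trans (Nat.le_succ k)))
      set S := ∑ i ∈ Finset.range (k + 2), α i with hS
      have hSk : ∑ i ∈ Finset.range (k + 1 + 1), α i = (∑ i ∈ Finset.range (k + 1), α i) + α (k + 1) :=
        Finset.sum_range_succ _ _
      have hαnn : ∀ i ∈ Finset.range (k + 1), 0 ≤ α i := fun i hi =>
        hα0 i (Nat.le_of_lt_succ (Nat.lt_succ_of_lt (Finset.mem_range.mp hi)))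
      have hSknn : 0 ≤ ∑ i ∈ Finset.range (k + 1), α i := Finset.sum_nonneg hαnn
      have hαk1 : 0 ≤ α (k + 1) := hα0 (k + 1) le_rfl
      have hSnn : 0 ≤ S := by rw [hS, hSk]; positivity
      by_cases hS0 : S = 0
      · -- all weights zero; parameter is 0, geo at 0 is the previous point
        have h0 : pcc n x α (k + 1) = pcc n x α k := by
          simp only [pcc, hS0.symm ▸ (by rfl : S = S)]
          rw [show (∑ i ∈ Finset.range (k + 2), α i) = S from rfl, if_pos hS0,
            Hadamard.geo_zero]
        refine ⟨h0 ▸ hmem, ?_⟩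
        have hα1z : α (k + 1) = 0 := by
          have : (∑ i ∈ Finset.range (k + 1), α i) + α (k + 1) = 0 := by
            rw [← hSk]; exact hS0
          linarith
        have hSkz : ∑ i ∈ Finset.range (k + 1), α i = 0 := by
          have : (∑ i ∈ Finset.range (k + 1), α i) + α (k + 1) = 0 := by
            rw [← hSk]; exact hS0
          linarith
        rw [h0, hS, hSk, hα1z, hSkz, Finset.sum_range_succ, hα1z]
        rw [hSkz] at hineq
        simpa using hineq
      · have hSpos : 0 < S := lt_of_le_of_ne hSnn (Ne.symm hS0)
        set t := α (k + 1) / S with ht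
        have htmem : t ∈ Set.Icc (0:ℝ) 1 := by
          constructor
          · positivity
          · rw [ht, div_le_one hSpos]
            rw [hS, hSk]; linarith
        have hpcc : pcc n x α (k + 1) = Hadamard.geo n (pcc n x α k) (x (k + 1)) t := by
          simp only [pcc]
          rw [if_neg hS0]
        refine ⟨hpcc ▸ hD _ hmem _ (hxD (k + 1) le_rfl) t htmem, ?_⟩
        have hconv := hf _ hmem _ (hxD (k + 1) le_rfl) t htmem
        rw [hpcc, hS, hSk]
        have h1t : (1 - t) * S = ∑ i ∈ Finset.range (k + 1), α i := by
          rw [ht]; field_simp; rw [hS, hSk]; ring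
        have htS : t * S = α (k + 1) := by rw [ht]; field_simp
        have hmul : ((∑ i ∈ Finset.range (k + 1), α i) + α (k + 1)) *
            f (Hadamard.geo n (pcc n x α k) (x (k + 1)) t) ≤
            (∑ i ∈ Finset.range (k + 1), α i) * f (pcc n x α k) + α (k + 1) * f (x (k + 1)) := by
          have := mul_le_mul_of_nonneg_left hconv hSnn
          calc ((∑ i ∈ Finset.range (k + 1), α i) + α (k + 1)) *
              f (Hadamard.geo n (pcc n x α k) (x (k + 1)) t)
              = S * f (Hadamard.geo n (pcc n x α k) (x (k + 1)) t) := by rw [hS, hSk]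
            _ ≤ S * ((1 - t) * f (pcc n x α k) + t * f (x (k + 1))) := this
            _ = (1 - t) * S * f (pcc n x α k) + t * S * f (x (k + 1)) := by ring
            _ = (∑ i ∈ Finset.range (k + 1), α i) * f (pcc n x α k)
                + α (k + 1) * f (x (k + 1)) := by rw [h1t, htS]
        calc ((∑ i ∈ Finset.range (k + 1), α i) + α (k + 1)) *
            f (Hadamard.geo n (pcc n x α k) (x (k + 1)) t)
            ≤ (∑ i ∈ Finset.range (k + 1), α i) * f (pcc n x α k)
              + α (k + 1) * f (x (k + 1)) := hmul
          _ ≤ (∑ i ∈ Finset.range (k + 1), α i * f (x i)) + α (k + 1) * f (x (k + 1)) := by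
              linarith
          _ = ∑ i ∈ Finset.range (k + 1 + 1), α i * f (x i) := (Finset.sum_range_succ _ _).symm
  obtain ⟨N', rfl⟩ : ∃ N', N = N' + 1 := ⟨N - 1, (Nat.succ_pred_eq_of_pos hN).symm⟩
  have h := key N' (fun i hi => hx i (Nat.lt_succ_of_le hi))
    (fun i hi => hα i (Nat.lt_succ_of_le hi))
  simpa [hsum] using h.2
end

section
/- Let M be an n-dimensional Hadamard manifold, Ω ⊆ M a nonempty closed convex set, and F : Ω × Ω → ℝ a bifunction with F(x,x) = 0 for all x ∈ Ω. Assume F is pseudomonotone (F(x,y) ≥ 0 implies F(y,x) ≤ 0) and that for every y ∈ Ω the set {x ∈ Ω : F(y,x) < 0} is convex. Fix z_0 ∈ M, k ∈ ℕ, and set Ω_k := {x ∈ Ω : d(x,z_0) ≤ k} and L_F(k,y) := {x ∈ Ω_k : F(y,x) ≤ 0}. Then for any y_1, …, y_{n+1} ∈ Ω_k, co({y_1,…,y_{n+1}}) ⊆ ∪_{i=1}^{n+1} L_F(k, y_i). -/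
open Set Filter

universe u v

/-- Let `M` be an `n`-dimensional Hadamard manifold, `Ω ⊆ M` nonempty
closed convex and `F : Ω × Ω → ℝ` with `F(x,x) = 0`, pseudomonotone, and such that for
every `y ∈ Ω` the set `{x ∈ Ω : F(y,x) < 0}` is convex.  Fix `z₀ ∈ M`, `k ∈ ℕ`, and set
`Ω_k = {x ∈ Ω : d(x,z₀) ≤ k}` and `L_F(k,y) = {x ∈ Ω_k : F(y,x) ≤ 0}`.  Then for any
`y_1, …, y_{n+1} ∈ Ω_k`, `co({y_1, …, y_{n+1}}) ⊆ ∪_{i=1}^{n+1} L_F(k, y_i)`. -/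
theorem pseudomonotone_kkm_condition {n : ℕ} {M : Type u} [Hadamard n M]
    {Ω : Set M} (hne : Ω.Nonempty) (hcl : IsClosed Ω) (hconv : GConvex n Ω)
    (F : M → M → ℝ) (hdiag : ∀ x ∈ Ω, F x x = 0)
    (hpm : ∀ x ∈ Ω, ∀ y ∈ Ω, 0 ≤ F x y → F y x ≤ 0)
    (hqc : ∀ y ∈ Ω, GConvex n {x | x ∈ Ω ∧ F y x < 0})
    (z₀ : M) (k : ℕ)
    (y : Fin (n + 1) → M) (hy : ∀ i, y i ∈ Ω ∧ dist (y i) z₀ ≤ (k : ℝ)) :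
    ghull n (Set.range y) ⊆
      ⋃ i, {x | (x ∈ Ω ∧ dist x z₀ ≤ (k : ℝ)) ∧ F (y i) x ≤ 0} := by
  
  -- geodesic from a point to itself is constant
  have geo_self : ∀ (z : M) (t : ℝ), t ∈ Set.Icc (0:ℝ) 1 → Hadamard.geo n z z t = z := by
    intro z t ht
    have h := Hadamard.geo_dist (n := n) z z 0 ⟨le_refl 0, zero_le_one⟩ t ht
    rw [Hadamard.geo_zero, dist_self, mul_zero] at h
    exact (dist_eq_zero.mp h).symm
  -- Ω_k is convex
  have hΩk : GConvex n {x | x ∈ Ω ∧ dist x z₀ ≤ (k : ℝ)} := by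
    intro a ha b hb t ht
    refine ⟨hconv a ha.1 b hb.1 t ht, ?_⟩
    have h := Hadamard.dist_convex (n := n) a b z₀ z₀ t ht
    rw [geo_self z₀ t ht] at h
    calc dist (Hadamard.geo n a b t) z₀ ≤ (1 - t) * dist a z₀ + t * dist b z₀ := h
      _ ≤ (1 - t) * k + t * k := by
          apply add_le_add
          · exact mul_le_mul_of_nonneg_left ha.2 (by linarith [ht.2])
          · exact mul_le_mul_of_nonneg_left hb.2 ht.1
      _ = k := by ring
  intro x hx
  have hxΩk : x ∈ {x | x ∈ Ω ∧ dist x z₀ ≤ (k : ℝ)} := by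
    apply hx
    exact ⟨hΩk, by rintro _ ⟨i, rfl⟩; exact hy i⟩
  by_contra hcon
  simp only [Set.mem_iUnion, Set.mem_setOf_eq, not_exists, not_and] at hcon
  have hpos : ∀ i, 0 < F (y i) x := by
    intro i
    by_contra h
    exact hcon i hxΩk (not_lt.mp h)
  -- each y i lies in the convex set {w ∈ Ω : F x w < 0}
  have hsub : Set.range y ⊆ {w | w ∈ Ω ∧ F x w < 0} := by
    rintro _ ⟨i, rfl⟩
    refine ⟨(hy i).1, ?_⟩
    by_contra h
    have := hpm x hxΩk.1 (y i) (hy i).1 (not_lt.mp h)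
    exact absurd this (not_le.mpr (hpos i))
  have hxC : x ∈ {w | w ∈ Ω ∧ F x w < 0} := hx _ ⟨hqc x hxΩk.1, hsub⟩
  have := hdiag x hxΩk.1
  linarith [hxC.2]
end

section
/- Let M be a Hadamard manifold, Ω ⊆ M a nonempty closed convex set, F : Ω × Ω → ℝ a monotone bifunction with F(x,x) = 0 for all x ∈ Ω, λ > 0 and x ∈ M. Define F_{λ,x}(z,y) := λ F(z,y) + d(z,x) b_{γ_{z,x}}(y) for z, y ∈ Ω, where the second term is understood to be 0 when z = x. Then F_{λ,x} is monotone; more precisely, F_{λ,x}(z,y) + F_{λ,x}(y,z) ≤ −(d(z,x) − d(y,x))² for all z, y ∈ Ω. -/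
open Set Filter

universe u v

lemma busemann_le {n : ℕ} {M : Type u} [Hadamard n M] (z x y : M) (h : z ≠ x) :
    busemann n z x y ≤ dist y x - dist z x := by
  set f : ℝ → ℝ := fun t => dist y (Hadamard.ray n z x t) - t with hf
  have hanti : ∀ s ∈ Set.Ici (0:ℝ), ∀ t ∈ Set.Ici (0:ℝ), s ≤ t → f t ≤ f s := by
    intro s hs t ht hst
    have hd := Hadamard.ray_isom (n := n) z x h s hs t ht
    have h1 : dist y (Hadamard.ray n z x t) ≤ dist y (Hadamard.ray n z x s) + (t - s) := by
      calc dist y (Hadamard.ray n z x t)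
          ≤ dist y (Hadamard.ray n z x s) +
            dist (Hadamard.ray n z x s) (Hadamard.ray n z x t) := dist_triangle _ _ _
        _ = dist y (Hadamard.ray n z x s) + (t - s) := by
            rw [hd, abs_of_nonpos (by linarith)]; ring
    simp only [hf]; linarith
  have hlb : ∀ t ∈ Set.Ici (0:ℝ), -(dist y z) ≤ f t := by
    intro t ht
    have hd := Hadamard.ray_isom (n := n) z x h 0 (mem_Ici.mpr le_rfl) t ht
    rw [Hadamard.ray_zero (n := n) z x h, abs_of_nonpos (by linarith [mem_Ici.mp ht])] at hd
    have := dist_triangle z y (Hadamard.ray n z x t)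
    have hdyz : dist z y = dist y z := dist_comm _ _
    simp only [hf]
    have : dist z (Hadamard.ray n z x t) ≤ dist z y + dist y (Hadamard.ray n z x t) :=
      dist_triangle _ _ _
    rw [hd] at this
    linarith [mem_Ici.mp ht]
  set g : ℝ → ℝ := fun t => f (max t 0) with hg
  have hganti : Antitone g := by
    intro s t hst
    exact hanti (max s 0) (mem_Ici.mpr (le_max_right _ _)) (max t 0) (mem_Ici.mpr (le_max_right _ _))
      (max_le_max hst le_rfl)
  have hgbdd : BddBelow (Set.range g) := by
    refine ⟨-(dist y z), ?_⟩
    rintro r ⟨t, rfl⟩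
    exact hlb _ (mem_Ici.mpr (le_max_right _ _))
  have htend : Tendsto g atTop (nhds (⨅ t, g t)) := tendsto_atTop_ciInf hganti hgbdd
  have hfeq : f =ᶠ[atTop] g := by
    filter_upwards [eventually_ge_atTop (0:ℝ)] with t ht
    simp only [hg, max_eq_left ht]
  have htendf : Tendsto f atTop (nhds (⨅ t, g t)) := htend.congr' hfeq.symm
  have hbus : busemann n z x y = ⨅ t, g t := htendf.limUnder_eq
  rw [hbus]
  have : g (dist z x) = dist y x - dist z x := by
    simp only [hg, hf, max_eq_left dist_nonneg, Hadamard.ray_through (n := n) z x h]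
  calc (⨅ t, g t) ≤ g (dist z x) := ciInf_le hgbdd _
    _ = dist y x - dist z x := this

/-- Let `M` be a Hadamard manifold, `Ω ⊆ M` nonempty closed convex,
`F : Ω × Ω → ℝ` a monotone bifunction with `F(x,x) = 0`, `λ > 0` and `x ∈ M`.  Then
`F_{λ,x}(z,y) = λ F(z,y) + d(z,x) b_{γ_{z,x}}(y)` (the regularization term being `0`
when `z = x`, as then `d(z,x) = 0`) is monotone; more precisely
`F_{λ,x}(z,y) + F_{λ,x}(y,z) ≤ −(d(z,x) − d(y,x))²` for all `z, y ∈ Ω`. -/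
theorem regularized_bifunction_monotone {n : ℕ} {M : Type u} [Hadamard n M]
    {Ω : Set M} (hne : Ω.Nonempty) (hcl : IsClosed Ω) (hconv : GConvex n Ω)
    (F : M → M → ℝ) (hdiag : ∀ x ∈ Ω, F x x = 0)
    (hmono : ∀ x ∈ Ω, ∀ y ∈ Ω, F x y + F y x ≤ 0)
    {lam : ℝ} (hlam : 0 < lam) (x : M) :
    ∀ z ∈ Ω, ∀ y ∈ Ω,
      (lam * F z y + dist z x * busemann n z x y) +
        (lam * F y z + dist y x * busemann n y x z) ≤
      -(dist z x - dist y x) ^ 2 := by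
  intro z hz y hy
  have hF := hmono z hz y hy
  have key : ∀ a b : M, dist a x * busemann n a x b ≤ dist a x * (dist b x - dist a x) := by
    intro a b
    by_cases hax : a = x
    · simp [hax]
    · exact mul_le_mul_of_nonneg_left (busemann_le a x b hax) dist_nonneg
  have k1 := key z y
  have k2 := key y z
  nlinarith [dist_nonneg (x := z) (y := x), dist_nonneg (x := y) (y := x), hlam.le,
    mul_nonpos_of_nonneg_of_nonpos hlam.le hF]
end

section
/- Let M be an n-dimensional Hadamard manifold, Ω ⊆ M a nonempty closed convex set, F : Ω × Ω → ℝ a monotone bifunction with F(x,x) = 0 for all x ∈ Ω, and λ > 0. Assume: for every x ∈ Ω, y ↦ F(x,y) is convex and lower semicontinuous; for every y ∈ Ω, x ↦ F(x,y) is upper semicontinuous; and for every z_0 ∈ M and every sequence {z^k} ⊂ Ω with d(z^k, z_0) → ∞ there exist x* ∈ Ω and k_0 ∈ ℕ with F(z^k, x*) ≤ 0 for all k ≥ k_0. Then for every x ∈ M the resolvent set J_λ^F(x) := {z ∈ Ω : λ F(z,y) + d(z,x) b_{γ_{z,x}}(y) ≥ 0 for all y ∈ Ω} is nonempty, where the regularization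 term d(z,x) b_{γ_{z,x}}(y) is understood to be 0 when z = x. -/
open Set Filter

universe u v

section Lemmas
open Topology

variable {n : ℕ} {M : Type u} [Hadamard n M]

lemma geo_self (x : M) {t : ℝ} (ht : t ∈ Set.Icc (0:ℝ) 1) : Hadamard.geo n x x t = x := by
  refine (Hadamard.geo_unique (n := n) x x x t ht ?_ ?_).symm <;> simp

lemma dist_geo_left (x y : M) {t : ℝ} (ht : t ∈ Set.Icc (0:ℝ) 1) :
    dist x (Hadamard.geo n x y t) = t * dist x y := by
  have h := Hadamard.geo_dist (n := n) x y 0 (by constructor <;> norm_num) t ht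
  rw [Hadamard.geo_zero] at h
  rw [h, abs_of_nonpos (by linarith [ht.1])]
  ring

lemma dist_geo_right (x y : M) {t : ℝ} (ht : t ∈ Set.Icc (0:ℝ) 1) :
    dist (Hadamard.geo n x y t) y = (1 - t) * dist x y := by
  have h := Hadamard.geo_dist (n := n) x y t ht 1 (by constructor <;> norm_num)
  rw [Hadamard.geo_one] at h
  rw [h, abs_of_nonpos (by linarith [ht.2])]
  ring

lemma dist_geo_convex (x y p : M) {t : ℝ} (ht : t ∈ Set.Icc (0:ℝ) 1) :
    dist (Hadamard.geo n x y t) p ≤ (1 - t) * dist x p + t * dist y p := by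
  have h := Hadamard.dist_convex (n := n) x y p p t ht
  rwa [geo_self p ht] at h

lemma log_self (z : M) : Hadamard.log (n := n) z z = 0 := by
  have := Hadamard.dist_log (n := n) z z
  rw [dist_self] at this
  exact norm_eq_zero.mp this.symm

/-- Continuity of `t ↦ geo z y t` at `0` along a sequence. -/
lemma geo_tendsto_zero (z y : M) {t : ℕ → ℝ} (ht : Tendsto t atTop (𝓝 0)) :
    Tendsto (fun k => Hadamard.geo n z y (t k)) atTop (𝓝 z) := by
  have h0 : Hadamard.exp z ((0:ℝ) • Hadamard.log (n := n) z y) = z := by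
    rw [zero_smul, ← log_self z, Hadamard.exp_log]
  have hcont : Continuous fun v : EuclideanSpace ℝ (Fin n) => Hadamard.exp (M := M) z v :=
    (Hadamard.exp_continuous (n := n) (M := M)).comp (continuous_const.prodMk continuous_id)
  have h1 : Tendsto (fun k => (t k) • Hadamard.log (n := n) z y) atTop
      (𝓝 ((0:ℝ) • Hadamard.log (n := n) z y)) := ht.smul tendsto_const_nhds
  have h2 := (hcont.tendsto _).comp h1
  rw [h0] at h2
  simpa [Hadamard.geo_exp, Function.comp_def] using h2

end Lemmas
section Busemann
open Topology

variable {n : ℕ} {M : Type u} [Hadamard n M]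

private lemma ray_dist_base {z x : M} (hzx : z ≠ x) {T : ℝ} (hT : 0 ≤ T) :
    dist z (Hadamard.ray n z x T) = T := by
  have h := Hadamard.ray_isom (n := n) z x hzx 0 (Set.mem_Ici.mpr le_rfl) T (Set.mem_Ici.mpr hT)
  rw [Hadamard.ray_zero (n := n) z x hzx] at h
  rw [h, abs_of_nonpos (by linarith)]
  ring

private lemma bfun_antitone {z x : M} (hzx : z ≠ x) (y : M) {S T : ℝ} (hS : 0 ≤ S) (hST : S ≤ T) :
    dist y (Hadamard.ray n z x T) - T ≤ dist y (Hadamard.ray n z x S) - S := by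
  have h := Hadamard.ray_isom (n := n) z x hzx S (Set.mem_Ici.mpr hS)
    T (Set.mem_Ici.mpr (hS.trans hST))
  have htri := dist_triangle y (Hadamard.ray n z x S) (Hadamard.ray n z x T)
  rw [h, abs_of_nonpos (by linarith)] at htri
  linarith

private lemma bfun_lb {z x : M} (hzx : z ≠ x) (y : M) {T : ℝ} (hT : 0 ≤ T) :
    - dist z y ≤ dist y (Hadamard.ray n z x T) - T := by
  have h := ray_dist_base (n := n) hzx hT
  have htri := dist_triangle z y (Hadamard.ray n z x T)
  have hc : dist y (Hadamard.ray n z x T) = dist (Hadamard.ray n z x T) y := dist_comm _ _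
  linarith

private lemma bfun_ub {z x : M} (hzx : z ≠ x) (y : M) {T : ℝ} (hT : 0 ≤ T) :
    dist y (Hadamard.ray n z x T) - T ≤ dist z y := by
  have h := bfun_antitone (n := n) hzx y le_rfl hT
  rw [Hadamard.ray_zero (n := n) z x hzx] at h
  rw [dist_comm z y]
  linarith [h]

lemma bus_tendsto {z x : M} (hzx : z ≠ x) (y : M) :
    Tendsto (fun T : ℝ => dist y (Hadamard.ray n z x T) - T) atTop
      (𝓝 (busemann n z x y)) := by
  set f : ℝ → ℝ := fun T => dist y (Hadamard.ray n z x T) - T with hf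
  have hbdd : BddBelow (f '' Set.Ici 0) := by
    refine ⟨- dist z y, ?_⟩
    rintro r ⟨T, hT, rfl⟩
    exact bfun_lb (n := n) hzx y hT
  have hne : (f '' Set.Ici 0).Nonempty := ⟨f 0, 0, Set.self_mem_Ici, rfl⟩
  set L := sInf (f '' Set.Ici 0) with hL
  have htd : Tendsto f atTop (𝓝 L) := by
    rw [Metric.tendsto_atTop]
    intro ε hε
    obtain ⟨r, ⟨T₁, hT₁, rfl⟩, hr⟩ : ∃ r ∈ f '' Set.Ici 0, r < L + ε :=
      exists_lt_of_csInf_lt hne (by linarith)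
    refine ⟨T₁, fun T hT => ?_⟩
    have h1 : L ≤ f T := csInf_le hbdd ⟨T, Set.mem_Ici.mpr (le_trans hT₁ hT), rfl⟩
    have h2 : f T ≤ f T₁ := bfun_antitone (n := n) hzx y hT₁ hT
    rw [Real.dist_eq, abs_sub_lt_iff]
    constructor <;> linarith
  have : busemann n z x y = L := htd.limUnder_eq
  rwa [this]

lemma bus_self {z x : M} (hzx : z ≠ x) : busemann n z x z = 0 := by
  have h := bus_tendsto (n := n) hzx z
  have h0 : Tendsto (fun T : ℝ => dist z (Hadamard.ray n z x T) - T) atTop (𝓝 0) := by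
    apply Tendsto.congr' _ tendsto_const_nhds
    filter_upwards [eventually_ge_atTop (0:ℝ)] with T hT
    rw [ray_dist_base (n := n) hzx hT]
    ring
  exact (tendsto_nhds_unique h0 h).symm

/-- upper bound along the ray at any nonnegative time -/
lemma bus_le_bfun {z x : M} (hzx : z ≠ x) (y : M) {T : ℝ} (hT : 0 ≤ T) :
    busemann n z x y ≤ dist y (Hadamard.ray n z x T) - T := by
  refine le_of_tendsto (bus_tendsto (n := n) hzx y) ?_
  filter_upwards [eventually_ge_atTop T] with S hS
  exact bfun_antitone (n := n) hzx y hT hS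

lemma bus_le {z x : M} (hzx : z ≠ x) (y : M) :
    busemann n z x y ≤ dist y x - dist z x := by
  have h := bus_le_bfun (n := n) hzx y (dist_nonneg (x := z) (y := x))
  rwa [Hadamard.ray_through (n := n) z x hzx] at h

lemma bus_lip {z x : M} (hzx : z ≠ x) (y y' : M) :
    busemann n z x y ≤ busemann n z x y' + dist y y' := by
  refine le_of_tendsto_of_tendsto' (bus_tendsto (n := n) hzx y)
    ((bus_tendsto (n := n) hzx y').add_const (dist y y')) (fun T => ?_)
  have := dist_triangle y y' (Hadamard.ray n z x T)
  linarith [this]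

lemma bus_convex {z x : M} (hzx : z ≠ x) (a b : M) {t : ℝ} (ht : t ∈ Set.Icc (0:ℝ) 1) :
    busemann n z x (Hadamard.geo n a b t) ≤
      (1 - t) * busemann n z x a + t * busemann n z x b := by
  refine le_of_tendsto_of_tendsto' (bus_tendsto (n := n) hzx _)
    (((bus_tendsto (n := n) hzx a).const_mul (1 - t)).add ((bus_tendsto (n := n) hzx b).const_mul t))
    (fun T => ?_)
  have h := dist_geo_convex (n := n) a b (Hadamard.ray n z x T) ht
  linarith [h]

/-- The key lower bound from the CN inequality:
`d(x,y)² - d(z,y)² - d(z,x)² ≤ 2 d(z,x) b_{z,x}(y)`. -/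
lemma bus_lower {z x : M} (hzx : z ≠ x) (y : M) :
    dist x y ^ 2 - dist z y ^ 2 - dist z x ^ 2 ≤
      2 * dist z x * busemann n z x y := by
  set d := dist z x with hd
  have hd0 : 0 < d := dist_pos.mpr hzx
  set D := dist z y with hD
  set f : ℝ → ℝ := fun T => dist y (Hadamard.ray n z x T) - T with hf
  -- eventual CN bound
  have hevent : ∀ T : ℝ, max d 1 ≤ T →
      dist x y ^ 2 ≤ (1 - d/T) * D^2 + (d/T) * (f T)^2 + 2*d*(f T) + d^2 := by
    intro T hT
    have hTd : d ≤ T := le_trans (le_max_left _ _) hT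
    have hT1 : (1:ℝ) ≤ T := le_trans (le_max_right _ _) hT
    have hT0 : 0 < T := by linarith
    have hmem : d / T ∈ Set.Icc (0:ℝ) 1 := by
      constructor
      · positivity
      · rw [div_le_one hT0]; exact hTd
    -- identify x = geo z (ray T) (d/T)
    have hxgeo : x = Hadamard.geo n z (Hadamard.ray n z x T) (d / T) := by
      apply Hadamard.geo_unique (n := n) z (Hadamard.ray n z x T) x (d/T) hmem
      · rw [ray_dist_base (n := n) hzx (le_of_lt hT0)]
        field_simp
        exact hd.symm
      · have h := Hadamard.ray_isom (n := n) z x hzx d (Set.mem_Ici.mpr (le_of_lt hd0))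
          T (Set.mem_Ici.mpr (le_of_lt hT0))
        rw [Hadamard.ray_through (n := n) z x hzx] at h
        rw [h, ray_dist_base (n := n) hzx (le_of_lt hT0), abs_of_nonpos (by linarith)]
        field_simp
        ring
    have hcn := Hadamard.cn_ineq (n := n) z (Hadamard.ray n z x T) y (d/T) hmem
    rw [← hxgeo, ray_dist_base (n := n) hzx (le_of_lt hT0)] at hcn
    have hray : dist (Hadamard.ray n z x T) y = f T + T := by
      simp only [hf]
      rw [dist_comm]
      ring
    rw [hray] at hcn
    have hTne : T ≠ 0 := ne_of_gt hT0
    calc dist x y ^2 ≤ (1 - d/T) * dist z y ^2 + (d/T) * (f T + T)^2 - (d/T)*(1 - d/T) * T^2 := hcn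
      _ = (1 - d/T) * D^2 + (d/T) * (f T)^2 + 2*d*(f T) + d^2 := by
          field_simp
          ring
  -- limit of the right-hand side
  have hlim : Tendsto (fun T : ℝ => (1 - d/T) * D^2 + (d/T) * (f T)^2 + 2*d*(f T) + d^2)
      atTop (𝓝 ((D^2 : ℝ) + 0 + 2*d*(busemann n z x y) + d^2)) := by
    have hdiv : Tendsto (fun T : ℝ => d / T) atTop (𝓝 0) :=
      tendsto_const_nhds.div_atTop tendsto_id
    have h1 : Tendsto (fun T : ℝ => (1 - d/T) * D^2) atTop (𝓝 (D^2)) := by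
      have := ((tendsto_const_nhds (x := (1:ℝ))).sub hdiv).mul_const (D^2)
      simpa using this
    have h2 : Tendsto (fun T : ℝ => (d/T) * (f T)^2) atTop (𝓝 0) := by
      have hg : Tendsto (fun T : ℝ => (d/T) * D^2) atTop (𝓝 0) := by
        have := hdiv.mul_const (D^2)
        simpa using this
      refine squeeze_zero' ?_ ?_ hg
      · filter_upwards [eventually_ge_atTop (max d 1)] with T hT
        have hT0 : (0:ℝ) < T := lt_of_lt_of_le (by positivity) hT
        positivity
      · filter_upwards [eventually_ge_atTop (max d 1)] with T hT
        have hT0 : (0:ℝ) < T := lt_of_lt_of_le (by positivity) hT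
        have hub : f T ≤ D := bfun_ub (n := n) hzx y (le_of_lt hT0)
        have hlb : -D ≤ f T := bfun_lb (n := n) hzx y (le_of_lt hT0)
        have hsq : (f T)^2 ≤ D^2 := sq_le_sq' hlb hub
        have h0 : 0 ≤ d / T := by positivity
        exact mul_le_mul_of_nonneg_left hsq h0
    have h3 : Tendsto (fun T : ℝ => 2*d*(f T)) atTop (𝓝 (2*d*(busemann n z x y))) :=
      (bus_tendsto (n := n) hzx y).const_mul _
    exact (((h1.add h2).add h3).add_const (d^2))
  have := ge_of_tendsto hlim (by
    filter_upwards [eventually_ge_atTop (max d 1)] with T hT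
    exact hevent T hT)
  nlinarith [this]

end Busemann
/-- The regularized bifunction `G(w,v) = λ F(w,v) + d(w,x) b_{w,x}(v)`. -/
noncomputable def resG (n : ℕ) {M : Type u} [Hadamard n M] (F : M → M → ℝ) (lam : ℝ)
    (x w v : M) : ℝ :=
  lam * F w v + dist w x * busemann n w x v

section GLemmas
open Topology

variable {n : ℕ} {M : Type u} [Hadamard n M]
variable {Ω : Set M} {F : M → M → ℝ} {lam : ℝ} {x : M}

lemma busterm_le (x w v : M) :
    dist w x * busemann n w x v ≤ dist w x * dist v x - dist w x * dist w x := by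
  by_cases hwx : w = x
  · simp [hwx]
  · have h := bus_le (n := n) hwx v
    nlinarith [dist_nonneg (x := w) (y := x), h]

lemma busterm_lower (x w v : M) :
    -(dist w x * busemann n w x v) ≤ (dist w v ^ 2 + dist w x ^ 2 - dist v x ^ 2) / 2 := by
  by_cases hwx : w = x
  · simp [hwx, dist_comm x v]
  · have h := bus_lower (n := n) hwx v
    rw [dist_comm x v] at h
    linarith

lemma resG_diag (hdiag : ∀ w ∈ Ω, F w w = 0) {w : M} (hw : w ∈ Ω) :
    resG n F lam x w w = 0 := by
  unfold resG
  rw [hdiag w hw]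
  by_cases hwx : w = x
  · simp [hwx]
  · rw [bus_self (n := n) hwx]
    ring

lemma resG_mono (hmono : ∀ a ∈ Ω, ∀ b ∈ Ω, F a b + F b a ≤ 0) (hlam : 0 < lam)
    {a b : M} (ha : a ∈ Ω) (hb : b ∈ Ω) :
    resG n F lam x a b + resG n F lam x b a ≤ 0 := by
  unfold resG
  have h1 := busterm_le (n := n) x a b
  have h2 := busterm_le (n := n) x b a
  have h3 := hmono a ha b hb
  have h4 : lam * (F a b + F b a) ≤ 0 := mul_nonpos_of_nonneg_of_nonpos hlam.le h3
  nlinarith [sq_nonneg (dist a x - dist b x)]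

lemma resG_convex2 (hconvf : ∀ w ∈ Ω, GConvexOn n Ω (fun v => F w v)) (hlam : 0 < lam)
    {w : M} (hw : w ∈ Ω) : GConvexOn n Ω (fun v => resG n F lam x w v) := by
  intro a ha b hb t ht
  unfold resG
  dsimp only
  have hF := hconvf w hw a ha b hb t ht
  dsimp only at hF
  have hFl : lam * F w (Hadamard.geo n a b t) ≤
      lam * ((1 - t) * F w a + t * F w b) := by
    exact mul_le_mul_of_nonneg_left hF hlam.le
  by_cases hwx : w = x
  · subst hwx
    simp only [dist_self, zero_mul, add_zero]
    have hr : (1 - t) * (lam * F w a) + t * (lam * F w b)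
        = lam * ((1 - t) * F w a + t * F w b) := by ring
    rw [hr]
    exact hFl
  · have hB := bus_convex (n := n) hwx a b ht
    have hBl : dist w x * busemann n w x (Hadamard.geo n a b t) ≤
        dist w x * ((1 - t) * busemann n w x a + t * busemann n w x b) :=
      mul_le_mul_of_nonneg_left hB dist_nonneg
    have hr : (1 - t) * (lam * F w a + dist w x * busemann n w x a)
        + t * (lam * F w b + dist w x * busemann n w x b)
        = lam * ((1 - t) * F w a + t * F w b)
          + dist w x * ((1 - t) * busemann n w x a + t * busemann n w x b) := by ring
    rw [hr]
    linarith [hFl, hBl]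

/-- Sequential lower-semicontinuity of `v ↦ G(w,v)` on `Ω`: if `G w (v k) ≤ a k → 0`
then `G w v̄ ≤ 0`. -/
lemma resG_lsc_seq (hlsc : ∀ w ∈ Ω, LowerSemicontinuousOn (fun v => F w v) Ω)
    (hlam : 0 < lam) {w : M} (hw : w ∈ Ω) {vbar : M} (hvbar : vbar ∈ Ω)
    {v : ℕ → M} (hvΩ : ∀ k, v k ∈ Ω) (hv : Tendsto v atTop (𝓝 vbar))
    {a : ℕ → ℝ} (ha : Tendsto a atTop (𝓝 0))
    (hb : ∀ᶠ k in atTop, resG n F lam x w (v k) ≤ a k) :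
    resG n F lam x w vbar ≤ 0 := by
  by_contra hpos
  push_neg at hpos
  set ε := resG n F lam x w vbar with hε
  -- Lipschitz bound for the Busemann term
  have hlip : ∀ k, dist w x * busemann n w x vbar ≤
      dist w x * busemann n w x (v k) + dist w x * dist (v k) vbar := by
    intro k
    by_cases hwx : w = x
    · simp [hwx]
    · have := bus_lip (n := n) hwx vbar (v k)
      rw [dist_comm vbar (v k)] at this
      nlinarith [dist_nonneg (x := w) (y := x), this]
  -- lower semicontinuity of F w
  have hF := hlsc w hw vbar hvbar (F w vbar - ε/(4*lam)) (by
    have : 0 < ε/(4*lam) := by positivity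
    linarith)
  have hvW : Tendsto v atTop (𝓝[Ω] vbar) :=
    tendsto_nhdsWithin_iff.mpr ⟨hv, Eventually.of_forall hvΩ⟩
  have hFev : ∀ᶠ k in atTop, F w vbar - ε/(4*lam) < F w (v k) := hvW.eventually hF
  have hdev : ∀ᶠ k in atTop, dist (v k) vbar < ε/(4*(dist w x + 1)) := by
    have hd : Tendsto (fun k => dist (v k) vbar) atTop (𝓝 0) :=
      tendsto_iff_dist_tendsto_zero.mp hv
    have h0 : 0 < ε/(4*(dist w x + 1)) := by positivity
    exact hd.eventually_lt_const h0
  have haev : ∀ᶠ k in atTop, a k < ε/4 := by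
    have h0 : 0 < ε/4 := by positivity
    exact ha.eventually_lt_const h0
  obtain ⟨k, ⟨⟨hFk, hdk⟩, hak⟩, hbk⟩ := (((hFev.and hdev).and haev).and hb).exists
  have hd0 : (0:ℝ) ≤ dist w x := dist_nonneg
  have hdd0 : (0:ℝ) ≤ dist (v k) vbar := dist_nonneg
  have hε0 : 0 < ε := hpos
  have hdx : dist w x * dist (v k) vbar ≤ ε/4 := by
    have h1 : dist w x * dist (v k) vbar ≤ dist w x * (ε/(4*(dist w x + 1))) :=
      mul_le_mul_of_nonneg_left hdk.le hd0
    have heq : dist w x * (ε/(4*(dist w x + 1))) = (dist w x * ε)/(4*(dist w x + 1)) := by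
      ring
    have h2 : dist w x * (ε/(4*(dist w x + 1))) ≤ ε/4 := by
      rw [heq, div_le_div_iff₀ (by positivity) (by norm_num : (0:ℝ) < 4)]
      nlinarith
    linarith
  have hFk' : lam * (F w vbar - ε/(4*lam)) ≤ lam * F w (v k) :=
    mul_le_mul_of_nonneg_left hFk.le hlam.le
  have hlameps : lam * (ε/(4*lam)) = ε/4 := by field_simp
  have hexp : lam * F w vbar - ε/4 ≤ lam * F w (v k) := by
    rw [mul_sub, hlameps] at hFk'
    linarith
  have hBk := hlip k
  have hGk : ε/2 ≤ resG n F lam x w (v k) := by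
    unfold resG at hε ⊢
    linarith
  have : a k < ε/2 := by linarith
  have : resG n F lam x w (v k) ≤ a k := hbk
  linarith

end GLemmas
section Jensen
variable {n : ℕ} {M : Type u} [Hadamard n M]

/-- Iterated geodesic convex combinations: a "barycenter" point satisfying Jensen's
inequality for all geodesically convex functions simultaneously. -/
lemma jensen_point {Ω K : Set M} (hKΩ : K ⊆ Ω) (hK : GConvex n K)
    {ι : Type v} (t : Finset ι) (pts : ι → M) :
    ∀ ω : ι → ℝ, (∀ i ∈ t, 0 ≤ ω i) → (∑ i ∈ t, ω i) = 1 → (∀ i ∈ t, pts i ∈ K) →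
    ∃ p ∈ K, ∀ g : M → ℝ, GConvexOn n Ω g → g p ≤ ∑ i ∈ t, ω i * g (pts i) := by
  classical
  induction t using Finset.induction_on with
  | empty => intro ω hω hsum hpts; simp at hsum
  | @insert j s hj ih =>
    intro ω hω hsum hpts
    rw [Finset.sum_insert hj] at hsum
    have hωj : 0 ≤ ω j := hω j (Finset.mem_insert_self j s)
    have hσ0 : 0 ≤ ∑ i ∈ s, ω i :=
      Finset.sum_nonneg fun i hi => hω i (Finset.mem_insert_of_mem hi)
    by_cases hσ : (∑ i ∈ s, ω i) = 0
    · have hzero : ∀ i ∈ s, ω i = 0 :=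
        (Finset.sum_eq_zero_iff_of_nonneg
          (fun i hi => hω i (Finset.mem_insert_of_mem hi))).mp hσ
      have hωj1 : ω j = 1 := by rw [hσ] at hsum; linarith
      refine ⟨pts j, hpts j (Finset.mem_insert_self j s), fun g hg => ?_⟩
      rw [Finset.sum_insert hj, hωj1, Finset.sum_eq_zero (fun i hi => by
        rw [hzero i hi, zero_mul])]
      linarith
    · have hσpos : 0 < ∑ i ∈ s, ω i := lt_of_le_of_ne hσ0 (Ne.symm hσ)
      set σ := ∑ i ∈ s, ω i with hσdef
      obtain ⟨p', hp'K, hp'⟩ := ih (fun i => ω i / σ)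
        (fun i hi => div_nonneg (hω i (Finset.mem_insert_of_mem hi)) hσpos.le)
        (by rw [← Finset.sum_div]; exact div_self (ne_of_gt hσpos))
        (fun i hi => hpts i (Finset.mem_insert_of_mem hi))
      have hωj1 : ω j ≤ 1 := by linarith
      have hmem : ω j ∈ Set.Icc (0:ℝ) 1 := ⟨hωj, hωj1⟩
      refine ⟨Hadamard.geo n p' (pts j) (ω j),
        hK p' hp'K (pts j) (hpts j (Finset.mem_insert_self j s)) (ω j) hmem,
        fun g hg => ?_⟩
      have h1 : g (Hadamard.geo n p' (pts j) (ω j)) ≤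
          (1 - ω j) * g p' + ω j * g (pts j) :=
        hg p' (hKΩ hp'K) (pts j) (hKΩ (hpts j (Finset.mem_insert_self j s))) (ω j) hmem
      have h2 : g p' ≤ ∑ i ∈ s, (ω i / σ) * g (pts i) := hp' g hg
      have h1σ : 1 - ω j = σ := by linarith
      have h3 : σ * ∑ i ∈ s, (ω i / σ) * g (pts i) = ∑ i ∈ s, ω i * g (pts i) := by
        rw [Finset.mul_sum]
        apply Finset.sum_congr rfl
        intro i _
        field_simp
      rw [Finset.sum_insert hj]
      calc g (Hadamard.geo n p' (pts j) (ω j)) ≤ (1 - ω j) * g p' + ω j * g (pts j) := h1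
        _ = σ * g p' + ω j * g (pts j) := by rw [h1σ]
        _ ≤ σ * (∑ i ∈ s, (ω i / σ) * g (pts i)) + ω j * g (pts j) := by
            have := mul_le_mul_of_nonneg_left h2 hσpos.le
            linarith
        _ = ω j * g (pts j) + ∑ i ∈ s, ω i * g (pts i) := by rw [h3]; ring

end Jensen
section FiniteMinty
open Topology
variable {n : ℕ} {M : Type u} [Hadamard n M]
variable {Ω : Set M} {F : M → M → ℝ} {lam : ℝ} {x : M}

/-- Finite Minty feasibility via Hahn–Banach separation. -/
lemma finite_minty (hdiag : ∀ w ∈ Ω, F w w = 0)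
    (hmono : ∀ a ∈ Ω, ∀ b ∈ Ω, F a b + F b a ≤ 0)
    (hconvf : ∀ w ∈ Ω, GConvexOn n Ω (fun v => F w v))
    (hlsc : ∀ w ∈ Ω, LowerSemicontinuousOn (fun v => F w v) Ω)
    (hlam : 0 < lam)
    {K : Set M} (hKne : K.Nonempty) (hKcmp : IsCompact K) (hKΩ : K ⊆ Ω) (hK : GConvex n K)
    (s : Finset M) (hs : ∀ w ∈ s, w ∈ K) :
    ∃ z ∈ K, ∀ w ∈ s, resG n F lam x w z ≤ 0 := by
  classical
  by_contra hcon
  push_neg at hcon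
  obtain ⟨z₀, hz₀⟩ := hKne
  -- uniform gap δ
  have hδex : ∃ δ > 0, ∀ z ∈ K, ∃ w ∈ s, δ ≤ resG n F lam x w z := by
    by_contra hno
    push_neg at hno
    have hseq : ∀ k : ℕ, ∃ z ∈ K, ∀ w ∈ s, resG n F lam x w z < 1/((k:ℝ)+1) :=
      fun k => hno (1/((k:ℝ)+1)) (by positivity)
    choose zk hzkK hzk using hseq
    obtain ⟨zb, hzbK, φ, hφ, hconvg⟩ := hKcmp.tendsto_subseq hzkK
    have hzb0 : ∀ w ∈ s, resG n F lam x w zb ≤ 0 := by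
      intro w hw
      refine resG_lsc_seq hlsc hlam (hKΩ (hs w hw)) (hKΩ hzbK)
        (fun k => hKΩ (hzkK (φ k))) hconvg (a := fun k => 1/((k:ℝ)+1))
        tendsto_one_div_add_atTop_nhds_zero_nat ?_
      filter_upwards with k
      have h1 : resG n F lam x w (zk (φ k)) < 1/((φ k : ℝ)+1) := hzk (φ k) w hw
      have hkk : (k:ℝ) ≤ (φ k : ℝ) := Nat.cast_le.mpr hφ.le_apply
      have h2 : (1:ℝ)/((φ k : ℝ)+1) ≤ 1/((k:ℝ)+1) :=
        one_div_le_one_div_of_le (by positivity) (by linarith)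
      linarith
    obtain ⟨w, hws, hwpos⟩ := hcon zb hzbK
    linarith [hzb0 w hws]
  obtain ⟨δ, hδ0, hδ⟩ := hδex
  obtain ⟨w₀, hw₀s, -⟩ := hcon z₀ hz₀
  set ι := {w : M // w ∈ s} with hι
  haveI : Nonempty ι := ⟨⟨w₀, hw₀s⟩⟩
  set A : Set (ι → ℝ) := {a | ∃ z ∈ K, ∀ i : ι, resG n F lam x (i:M) z ≤ a i} with hA
  set B : Set (ι → ℝ) := {b | ∀ i : ι, b i < δ/2} with hB
  have hBeq : B = Set.pi Set.univ (fun _ => Set.Iio (δ/2)) := by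
    ext b; simp [hB, Set.mem_pi]
  have hBopen : IsOpen B := by
    rw [hBeq]; exact isOpen_set_pi Set.finite_univ (fun i _ => isOpen_Iio)
  have hBconv : Convex ℝ B := by
    rw [hBeq]; exact convex_pi (fun i _ => convex_Iio _)
  have hAconv : Convex ℝ A := by
    rintro a ⟨z₁, hz₁K, ha⟩ b ⟨z₂, hz₂K, hb⟩ α β hα hβ hαβ
    have htmem : β ∈ Set.Icc (0:ℝ) 1 := ⟨hβ, by linarith⟩
    refine ⟨Hadamard.geo n z₁ z₂ β, hK z₁ hz₁K z₂ hz₂K β htmem, fun i => ?_⟩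
    have hcv := resG_convex2 (n := n) (x := x) hconvf hlam (hKΩ (hs (i:M) i.2))
      z₁ (hKΩ hz₁K) z₂ (hKΩ hz₂K) β htmem
    dsimp only at hcv
    have h1β : 1 - β = α := by linarith
    rw [h1β] at hcv
    have ha' := mul_le_mul_of_nonneg_left (ha i) hα
    have hb' := mul_le_mul_of_nonneg_left (hb i) hβ
    have : (α • a + β • b) i = α * a i + β * b i := by
      simp [Pi.add_apply, smul_eq_mul]
    rw [this]
    linarith
  have hdisj : Disjoint B A := by
    rw [Set.disjoint_left]
    rintro b hbB ⟨z, hzK, hz⟩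
    obtain ⟨w, hws, hwδ⟩ := hδ z hzK
    have h1 : resG n F lam x w z ≤ b ⟨w, hws⟩ := hz ⟨w, hws⟩
    have h2 : b ⟨w, hws⟩ < δ/2 := hbB ⟨w, hws⟩
    linarith
  obtain ⟨f, u, hfB, hfA⟩ := geometric_hahn_banach_open hBconv hBopen hAconv hdisj
  set μ : ι → ℝ := fun i => f (fun j => if i = j then (1:ℝ) else 0) with hμ
  have hf_repr : ∀ v : ι → ℝ, f v = ∑ i : ι, v i * μ i := by
    intro v
    have hv : v = ∑ i : ι, v i • (fun j => if i = j then (1:ℝ) else 0) := pi_eq_sum_univ v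
    conv_lhs => rw [hv]
    rw [map_sum]
    exact Finset.sum_congr rfl fun i _ => by rw [f.map_smul, smul_eq_mul]
  -- μ is nonnegative
  have hμ0 : ∀ i, 0 ≤ μ i := by
    intro i
    by_contra hneg
    push_neg at hneg
    have hCB : (fun _ : ι => δ/2 - 1) ∈ B := by
      simp only [hB, Set.mem_setOf_eq]
      intro j; norm_num
    have hC₀ : f (fun _ : ι => δ/2 - 1) < u := hfB _ hCB
    set C₀ := f (fun _ : ι => δ/2 - 1) with hC₀def
    set c := (u - C₀)/(-μ i) with hc
    have hμine : -μ i > 0 := by linarith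
    have hc0 : 0 < c := div_pos (by linarith) hμine
    have hvB : (fun j => (δ/2 - 1) - (if i = j then c else 0)) ∈ B := by
      simp only [hB, Set.mem_setOf_eq]
      intro j
      by_cases hij : i = j <;> simp [hij] <;> nlinarith
    have hC₀' : C₀ = ∑ j : ι, (δ/2 - 1) * μ j := by rw [hC₀def, hf_repr]
    have hsplit : f (fun j => (δ/2 - 1) - (if i = j then c else 0))
        = C₀ - c * μ i := by
      rw [hf_repr, hC₀']
      have hterm : ∀ j : ι, ((δ/2 - 1) - (if i = j then c else 0)) * μ j
          = (δ/2 - 1) * μ j - (if i = j then c * μ j else 0) := by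
        intro j; by_cases hij : i = j <;> simp [hij]; ring
      simp_rw [hterm]
      rw [Finset.sum_sub_distrib]
      congr 1
      rw [Finset.sum_ite_eq]
      simp
    have hlt := hfB _ hvB
    rw [hsplit] at hlt
    have hcμ : c * (-μ i) = u - C₀ := by
      rw [hc]; exact div_mul_cancel₀ _ (ne_of_gt hμine)
    nlinarith
  have hμsum0 : 0 ≤ ∑ i : ι, μ i := Finset.sum_nonneg fun i _ => hμ0 i
  have hμsum : 0 < ∑ i : ι, μ i := by
    rcases hμsum0.lt_or_eq with h | h
    · exact h
    · exfalso
      have hall : ∀ i ∈ Finset.univ (α := ι), μ i = 0 :=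
        (Finset.sum_eq_zero_iff_of_nonneg (fun i _ => hμ0 i)).mp h.symm
      have hf0 : ∀ v : ι → ℝ, f v = 0 := fun v => by
        rw [hf_repr]
        exact Finset.sum_eq_zero fun i hi => by rw [hall i hi, mul_zero]
      have hCB : (fun _ : ι => δ/2 - 1) ∈ B := by
        simp only [hB, Set.mem_setOf_eq]; intro j; norm_num
      have h1 : f (fun _ : ι => δ/2 - 1) < u := hfB _ hCB
      have h2 : u ≤ f (fun i : ι => resG n F lam x (i:M) z₀) :=
        hfA _ ⟨z₀, hz₀, fun i => le_rfl⟩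
      rw [hf0] at h1
      rw [hf0] at h2
      linarith
  set Sμ := ∑ i : ι, μ i with hSμ
  have husum : (δ/2) * Sμ ≤ u := by
    by_contra hlt
    push_neg at hlt
    set ε := ((δ/2) * Sμ - u) / Sμ with hε
    have hε0 : 0 < ε := div_pos (by linarith) hμsum
    have hvB : (fun _ : ι => δ/2 - ε) ∈ B := by
      simp only [hB, Set.mem_setOf_eq]; intro j; linarith
    have h1 := hfB _ hvB
    rw [hf_repr] at h1
    have hval : ∑ i : ι, (δ/2 - ε) * μ i = (δ/2 - ε) * Sμ := by
      rw [hSμ, ← Finset.mul_sum]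
    rw [hval] at h1
    have hεS : ε * Sμ = (δ/2) * Sμ - u := by
      rw [hε]; exact div_mul_cancel₀ _ (ne_of_gt hμsum)
    nlinarith
  -- Jensen point
  set ν : ι → ℝ := fun i => μ i / Sμ with hν
  have hν0 : ∀ i, 0 ≤ ν i := fun i => div_nonneg (hμ0 i) hμsum.le
  have hνsum : ∑ i : ι, ν i = 1 := by
    simp only [hν]
    rw [← Finset.sum_div, ← hSμ]
    exact div_self (ne_of_gt hμsum)
  obtain ⟨p, hpK, hp⟩ := jensen_point (n := n) (Ω := Ω) hKΩ hK Finset.univ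
    (fun i : ι => (i : M)) ν (fun i _ => hν0 i) hνsum (fun i _ => hs (i:M) i.2)
  have hjen : ∀ i : ι, resG n F lam x (i:M) p ≤
      ∑ j : ι, ν j * resG n F lam x (i:M) (j:M) :=
    fun i => hp _ (resG_convex2 (n := n) (x := x) hconvf hlam (hKΩ (hs _ i.2)))
  have hpair : ∀ i j : ι, ν i * ν j *
      (resG n F lam x (i:M) (j:M) + resG n F lam x (j:M) (i:M)) ≤ 0 := fun i j =>
    mul_nonpos_of_nonneg_of_nonpos (mul_nonneg (hν0 i) (hν0 j))
      (resG_mono hmono hlam (hKΩ (hs _ i.2)) (hKΩ (hs _ j.2)))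
  have hS : ∑ i : ι, ∑ j : ι, ν i * ν j * resG n F lam x (i:M) (j:M) ≤ 0 := by
    have hT : ∑ i : ι, ∑ j : ι, ν i * ν j * resG n F lam x (j:M) (i:M)
        = ∑ i : ι, ∑ j : ι, ν i * ν j * resG n F lam x (i:M) (j:M) := by
      rw [Finset.sum_comm]
      exact Finset.sum_congr rfl fun i _ => Finset.sum_congr rfl fun j _ => by ring
    have hsum2 : (∑ i : ι, ∑ j : ι, ν i * ν j * resG n F lam x (i:M) (j:M))
        + (∑ i : ι, ∑ j : ι, ν i * ν j * resG n F lam x (j:M) (i:M))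
        = ∑ i : ι, ∑ j : ι, ν i * ν j *
            (resG n F lam x (i:M) (j:M) + resG n F lam x (j:M) (i:M)) := by
      rw [← Finset.sum_add_distrib]
      exact Finset.sum_congr rfl fun i _ => by
        rw [← Finset.sum_add_distrib]
        exact Finset.sum_congr rfl fun j _ => by ring
    have hle : ∑ i : ι, ∑ j : ι, ν i * ν j *
        (resG n F lam x (i:M) (j:M) + resG n F lam x (j:M) (i:M)) ≤ 0 :=
      Finset.sum_nonpos fun i _ => Finset.sum_nonpos fun j _ => hpair i j
    linarith
  have hkey : ∑ i : ι, ν i * resG n F lam x (i:M) p ≤ 0 := by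
    have h1 : ∑ i : ι, ν i * resG n F lam x (i:M) p ≤
        ∑ i : ι, ν i * ∑ j : ι, ν j * resG n F lam x (i:M) (j:M) :=
      Finset.sum_le_sum fun i _ => mul_le_mul_of_nonneg_left (hjen i) (hν0 i)
    have h2 : ∑ i : ι, ν i * ∑ j : ι, ν j * resG n F lam x (i:M) (j:M)
        = ∑ i : ι, ∑ j : ι, ν i * ν j * resG n F lam x (i:M) (j:M) :=
      Finset.sum_congr rfl fun i _ => by
        rw [Finset.mul_sum]
        exact Finset.sum_congr rfl fun j _ => by ring
    linarith
  have h1 : u ≤ f (fun i : ι => resG n F lam x (i:M) p) :=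
    hfA _ ⟨p, hpK, fun i => le_rfl⟩
  have h2 : f (fun i : ι => resG n F lam x (i:M) p)
      = ∑ i : ι, resG n F lam x (i:M) p * μ i := hf_repr _
  have h3 : ∑ i : ι, resG n F lam x (i:M) p * μ i
      = Sμ * ∑ i : ι, ν i * resG n F lam x (i:M) p := by
    rw [Finset.mul_sum]
    apply Finset.sum_congr rfl
    intro i _
    simp only [hν]
    field_simp
  have h4 : Sμ * ∑ i : ι, ν i * resG n F lam x (i:M) p ≤ 0 :=
    mul_nonpos_of_nonneg_of_nonpos hμsum.le hkey
  have h5 : 0 < (δ/2) * Sμ := mul_pos (by linarith) hμsum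
  linarith

end FiniteMinty
section Conversion
open Topology
variable {n : ℕ} {M : Type u} [Hadamard n M]
variable {Ω : Set M} {F : M → M → ℝ} {lam : ℝ} {x : M}

set_option maxHeartbeats 1000000 in
/-- Conversion of a Minty solution into a solution of the resolvent inequality, via
geodesic perturbation, the CN inequality and upper semicontinuity. -/
lemma minty_to_goal (hdiag : ∀ w ∈ Ω, F w w = 0)
    (hconvf : ∀ w ∈ Ω, GConvexOn n Ω (fun v => F w v))
    (husc : ∀ y ∈ Ω, UpperSemicontinuousOn (fun w => F w y) Ω)
    (hlam : 0 < lam)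
    {C : Set M} (hC : GConvex n C) (hCΩ : C ⊆ Ω)
    {z : M} (hz : z ∈ C) {y : M} (hy : y ∈ C)
    (hminty : ∀ w ∈ C, resG n F lam x w z ≤ 0) :
    0 ≤ lam * F z y + dist z x * busemann n z x y := by
  have hzΩ : z ∈ Ω := hCΩ hz
  have hyΩ : y ∈ Ω := hCΩ hy
  set d := dist z x with hd
  set D := dist z y with hD
  set dxy := dist x y with hdxy
  -- Step 1: lam * F z y ≥ (d² + D² - dxy²)/2
  have hclaim : (d^2 + D^2 - dxy^2)/2 ≤ lam * F z y := by
    by_contra hlt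
    push_neg at hlt
    set τ := (d^2 + D^2 - dxy^2)/2 with hτ
    set c := (lam * F z y + τ)/2 with hc
    have hczy : lam * F z y < c := by rw [hc]; linarith
    have hcτ : c < τ := by rw [hc]; linarith
    -- the perturbed points
    set t : ℕ → ℝ := fun k => 1/((k:ℝ)+2) with ht
    have ht01 : ∀ k, t k ∈ Set.Icc (0:ℝ) 1 := by
      intro k
      constructor
      · positivity
      · rw [div_le_one (by positivity)]
        have : (0:ℝ) ≤ (k:ℝ) := Nat.cast_nonneg k
        linarith
    have ht0 : ∀ k, 0 < t k := fun k => by positivity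
    have htlim : Tendsto t atTop (𝓝 0) := by
      have h1 : Tendsto (fun k : ℕ => ((k:ℝ)+2)) atTop atTop :=
        tendsto_atTop_add_const_right _ 2 tendsto_natCast_atTop_atTop
      have h2 := tendsto_inv_atTop_zero.comp h1
      simpa [ht, Function.comp_def, one_div] using h2
    set w : ℕ → M := fun k => Hadamard.geo n z y (t k) with hw
    have hwC : ∀ k, w k ∈ C := fun k => hC z hz y hy (t k) (ht01 k)
    have hwΩ : ∀ k, w k ∈ Ω := fun k => hCΩ (hwC k)
    -- lower bound for lam * F (w k) y
    have hlow : ∀ k, -((1 - t k)/2) * (dxy^2 - d^2 - D^2 + 2*(t k)*D^2) ≤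
        lam * F (w k) y := by
      intro k
      -- convexity & diagonal
      have hcv := hconvf (w k) (hwΩ k) z hzΩ y hyΩ (t k) (ht01 k)
      dsimp only at hcv
      rw [show Hadamard.geo n z y (t k) = w k from rfl] at hcv
      have hdiagk : F (w k) (w k) = 0 := hdiag (w k) (hwΩ k)
      rw [hdiagk] at hcv
      -- Minty at w k
      have hmk := hminty (w k) (hwC k)
      unfold resG at hmk
      have hbusb := busterm_lower (n := n) x (w k) z
      -- CN bound for dist (w k) x
      have hcn := Hadamard.cn_ineq (n := n) z y x (t k) (ht01 k)
      have hdzw : dist (w k) z = (t k) * D := by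
        rw [hw]
        rw [dist_comm]
        exact dist_geo_left (n := n) z y (ht01 k)
      -- combine: lam * F (w k) z ≤ (t/2)(dxy² - d² - D² + 2tD²)
      have hFz : lam * F (w k) z ≤
          (t k)/2 * ((dist y x)^2 - d^2 - D^2 + 2*(t k)*D^2) := by
        have h1 : lam * F (w k) z ≤ -(dist (w k) x * busemann n (w k) x z) := by
          linarith
        have h2 : -(dist (w k) x * busemann n (w k) x z) ≤
            (dist (w k) z ^2 + dist (w k) x ^2 - dist z x ^2)/2 := hbusb
        have h3 : dist (w k) x ^2 ≤
            (1 - t k) * d^2 + (t k) * (dist y x)^2 - (t k)*(1 - t k)*D^2 := by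
          rw [hw]
          exact hcn
        rw [hdzw] at h2
        nlinarith [h1, h2, h3, sq_nonneg (t k), sq_nonneg D]
      -- convexity gives t * (lam F (w k) y) ≥ -(1-t) * (lam F (w k) z)
      have htk0 := ht0 k
      have h1tk : 0 ≤ 1 - t k := by linarith [(ht01 k).2]
      have h0 : lam * (0:ℝ) ≤ lam * ((1 - t k) * F (w k) z + t k * F (w k) y) :=
        mul_le_mul_of_nonneg_left hcv hlam.le
      have hkey : -((1 - t k) * (lam * F (w k) z)) ≤ (t k) * (lam * F (w k) y) := by
        nlinarith [h0]
      have hmul := mul_le_mul_of_nonneg_left hFz h1tk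
      have hstep : (t k) * (-((1 - t k)/2) * ((dist y x)^2 - d^2 - D^2 + 2*(t k)*D^2))
          ≤ (t k) * (lam * F (w k) y) := by
        have hring : (t k) * (-((1 - t k)/2) * ((dist y x)^2 - d^2 - D^2 + 2*(t k)*D^2))
            = -((1 - t k) * ((t k)/2 * ((dist y x)^2 - d^2 - D^2 + 2*(t k)*D^2))) := by
          ring
        rw [hring]
        linarith [hmul, hkey]
      have hdiv := le_of_mul_le_mul_left hstep htk0
      have hcomm : dxy = dist y x := by rw [hdxy, dist_comm]
      rw [hcomm]
      exact hdiv
    -- the lower bound tends to τ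
    have hlimlow : Tendsto (fun k => -((1 - t k)/2) * (dxy^2 - d^2 - D^2 + 2*(t k)*D^2))
        atTop (𝓝 τ) := by
      have h1 : Tendsto (fun k => -((1 - t k)/2)) atTop (𝓝 (-(1/2 : ℝ))) := by
        have := ((tendsto_const_nhds (x := (1:ℝ))).sub htlim).div_const 2
        simpa using this.neg
      have h2 : Tendsto (fun k => dxy^2 - d^2 - D^2 + 2*(t k)*D^2) atTop
          (𝓝 (dxy^2 - d^2 - D^2)) := by
        have h3 : Tendsto (fun k => 2*(t k)*D^2) atTop (𝓝 0) := by
          have heq : (fun k => 2*(t k)*D^2) = (fun k => (2*D^2) * (t k)) := by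
            funext k; ring
          rw [heq]
          have h3' := htlim.const_mul (2*D^2)
          rw [mul_zero] at h3'
          exact h3'
        have := (tendsto_const_nhds (x := dxy^2 - d^2 - D^2)).add h3
        simpa using this
      have := h1.mul h2
      have heq : -(1/2 : ℝ) * (dxy^2 - d^2 - D^2) = τ := by rw [hτ]; ring
      rwa [heq] at this
    -- usc contradiction
    have husc' := husc y hyΩ z hzΩ (F z y + (c/lam - F z y)) (by
      have : F z y < c/lam := by
        rw [lt_div_iff₀ hlam]
        linarith [hczy]
      linarith)
    have hwlim : Tendsto w atTop (𝓝 z) := geo_tendsto_zero (n := n) z y htlim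
    have hwW : Tendsto w atTop (𝓝[Ω] z) :=
      tendsto_nhdsWithin_iff.mpr ⟨hwlim, Eventually.of_forall hwΩ⟩
    have hFev : ∀ᶠ k in atTop, F (w k) y < F z y + (c/lam - F z y) := hwW.eventually husc'
    have hcev : ∀ᶠ k in atTop, c < -((1 - t k)/2) * (dxy^2 - d^2 - D^2 + 2*(t k)*D^2) :=
      hlimlow.eventually_const_lt hcτ
    obtain ⟨k, hFk, hck⟩ := (hFev.and hcev).exists
    have h1 : lam * F (w k) y < lam * (c/lam) := by
      have : F (w k) y < c/lam := by linarith
      exact mul_lt_mul_of_pos_left this hlam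
    have h2 : lam * (c/lam) = c := by field_simp
    linarith [hlow k]
  -- Step 2: conclude
  by_cases hzx : z = x
  · subst hzx
    have hDdxy : D = dxy := by rw [hD, hdxy]
    have hd0 : d = 0 := by rw [hd, dist_self]
    rw [hd0] at hclaim
    rw [hDdxy] at hclaim
    have : 0 ≤ lam * F z y := by linarith
    rw [hd, dist_self]
    linarith
  · have hbl := bus_lower (n := n) hzx y
    rw [← hd, ← hD] at hbl
    have hdxy' : dist x y = dxy := rfl
    rw [hdxy'] at hbl
    linarith

end Conversion
section Main
open Topology
set_option maxHeartbeats 1000000 in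

/-- Let `M` be an `n`-dimensional Hadamard manifold, `Ω ⊆ M` nonempty
closed convex, `F : Ω × Ω → ℝ` a monotone bifunction with `F(x,x) = 0` and `λ > 0`.
Assume: for every `x ∈ Ω`, `y ↦ F(x,y)` is convex and lower semicontinuous; for every
`y ∈ Ω`, `x ↦ F(x,y)` is upper semicontinuous; and the coercivity condition (iv).  Then
for every `x ∈ M` the resolvent
`J_λ^F(x) = {z ∈ Ω : λ F(z,y) + d(z,x) b_{γ_{z,x}}(y) ≥ 0 for all y ∈ Ω}`
is nonempty (the regularization term being `0` when `z = x`, as then `d(z,x) = 0`). -/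
theorem resolvent_nonempty {n : ℕ} {M : Type u} [Hadamard n M]
    {Ω : Set M} (hne : Ω.Nonempty) (hcl : IsClosed Ω) (hconv : GConvex n Ω)
    (F : M → M → ℝ) (hdiag : ∀ x ∈ Ω, F x x = 0)
    (hmono : ∀ x ∈ Ω, ∀ y ∈ Ω, F x y + F y x ≤ 0)
    (hconvf : ∀ x ∈ Ω, GConvexOn n Ω (fun y => F x y))
    (hlsc : ∀ x ∈ Ω, LowerSemicontinuousOn (fun y => F x y) Ω)
    (husc : ∀ y ∈ Ω, UpperSemicontinuousOn (fun x => F x y) Ω)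
    (hcoer : ∀ z₀ : M, ∀ z : ℕ → M, (∀ k, z k ∈ Ω) →
      Tendsto (fun k => dist (z k) z₀) atTop atTop →
      ∃ xs ∈ Ω, ∃ k₀ : ℕ, ∀ k ≥ k₀, F (z k) xs ≤ 0)
    {lam : ℝ} (hlam : 0 < lam) (x : M) :
    {z | z ∈ Ω ∧ ∀ y ∈ Ω,
      0 ≤ lam * F z y + dist z x * busemann n z x y}.Nonempty := by
  classical
  haveI : ProperSpace M := Hadamard.properSpace (n := n) (M := M)
  obtain ⟨w₀, hw₀⟩ := hne
  set R₀ := dist w₀ x with hR₀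
  have hR₀0 : 0 ≤ R₀ := dist_nonneg
  set K : ℕ → Set M := fun k => Ω ∩ Metric.closedBall x (R₀ + k) with hKdef
  have hKne : ∀ k, (K k).Nonempty := by
    intro k
    refine ⟨w₀, hw₀, ?_⟩
    rw [Metric.mem_closedBall]
    have hk0 : (0:ℝ) ≤ (k:ℝ) := Nat.cast_nonneg k
    rw [← hR₀]
    linarith
  have hKcmp : ∀ k, IsCompact (K k) := fun k =>
    (isCompact_closedBall x _).inter_left hcl
  have hKsub : ∀ k, K k ⊆ Ω := fun k => Set.inter_subset_left
  have hKconv : ∀ k, GConvex n (K k) := by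
    intro k a ha b hb t ht
    refine ⟨hconv a ha.1 b hb.1 t ht, ?_⟩
    rw [Metric.mem_closedBall]
    have h := dist_geo_convex (n := n) a b x ht
    have h1 : dist a x ≤ R₀ + k := Metric.mem_closedBall.mp ha.2
    have h2 : dist b x ≤ R₀ + k := Metric.mem_closedBall.mp hb.2
    have ht0 := ht.1
    have ht1 := ht.2
    nlinarith [mul_le_mul_of_nonneg_left h1 (by linarith : (0:ℝ) ≤ 1 - t),
      mul_le_mul_of_nonneg_left h2 ht0]
  have hminty : ∀ k, ∃ z ∈ K k, ∀ w ∈ K k, resG n F lam x w z ≤ 0 := by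
    intro k
    by_contra hcon
    push_neg at hcon
    have hTcl : ∀ w : K k, IsClosed {v | v ∈ Ω ∧ resG n F lam x (w:M) v ≤ 0} := by
      intro w
      apply IsSeqClosed.isClosed
      intro v vb hvT hvlim
      have hvbΩ : vb ∈ Ω := hcl.isSeqClosed (fun j => (hvT j).1) hvlim
      exact ⟨hvbΩ, resG_lsc_seq hlsc hlam (hKsub k w.2) hvbΩ (fun j => (hvT j).1) hvlim
        (a := fun _ => (0:ℝ)) tendsto_const_nhds (Eventually.of_forall fun j => (hvT j).2)⟩
    have hint : K k ∩ ⋂ w : K k, {v | v ∈ Ω ∧ resG n F lam x (w:M) v ≤ 0} = ∅ := by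
      rw [Set.eq_empty_iff_forall_notMem]
      rintro z ⟨hzK, hz⟩
      rw [Set.mem_iInter] at hz
      obtain ⟨w, hwK, hwpos⟩ := hcon z hzK
      have := (hz ⟨w, hwK⟩).2
      linarith
    obtain ⟨u, hu⟩ := (hKcmp k).elim_finite_subfamily_closed _ hTcl hint
    obtain ⟨z, hzK, hz⟩ := finite_minty (n := n) (x := x) hdiag hmono hconvf hlsc hlam
      (hKne k) (hKcmp k) (hKsub k) (hKconv k) (u.image Subtype.val)
      (by
        intro w hw
        rw [Finset.mem_image] at hw
        obtain ⟨w', _, rfl⟩ := hw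
        exact w'.2)
    rw [Set.eq_empty_iff_forall_notMem] at hu
    apply hu z
    refine ⟨hzK, ?_⟩
    rw [Set.mem_iInter₂]
    intro w hw
    exact ⟨hKsub k hzK, hz (w:M) (Finset.mem_image_of_mem _ hw)⟩
  choose zf hzfK hzf using hminty
  by_cases hT : Tendsto (fun k => dist (zf k) x) atTop atTop
  · exfalso
    obtain ⟨xs, hxsΩ, k₀, hk₀⟩ := hcoer x zf (fun k => (hzfK k).1) hT
    have hev1 : ∀ᶠ k in atTop, dist xs x < dist (zf k) x :=
      hT.eventually_gt_atTop (dist xs x)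
    have hev2 : ∀ᶠ k : ℕ in atTop, dist xs x ≤ R₀ + (k:ℝ) := by
      filter_upwards [eventually_ge_atTop (Nat.ceil (dist xs x))] with k hk
      have h1 : dist xs x ≤ (Nat.ceil (dist xs x) : ℝ) := Nat.le_ceil _
      have h2 : ((Nat.ceil (dist xs x) : ℕ) : ℝ) ≤ (k:ℝ) := Nat.cast_le.mpr hk
      linarith
    have hev3 : ∀ᶠ k in atTop, k₀ ≤ k := eventually_ge_atTop k₀
    obtain ⟨k, ⟨h1, h2⟩, h3⟩ := ((hev1.and hev2).and hev3).exists
    have hxsK : xs ∈ K k := ⟨hxsΩ, Metric.mem_closedBall.mpr h2⟩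
    have hgoal := minty_to_goal (n := n) hdiag hconvf husc hlam (hKconv k) (hKsub k)
      (hzfK k) hxsK (hzf k)
    have hFle : F (zf k) xs ≤ 0 := hk₀ k h3
    have hdpos : 0 < dist (zf k) x := lt_of_le_of_lt dist_nonneg h1
    have hzx : zf k ≠ x := by
      intro heq
      rw [heq, dist_self] at hdpos
      exact lt_irrefl 0 hdpos
    have hb := bus_le (n := n) hzx xs
    have hFneg : lam * F (zf k) xs ≤ 0 := mul_nonpos_of_nonneg_of_nonpos hlam.le hFle
    have hbusneg : dist (zf k) x * busemann n (zf k) x xs ≤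
        dist (zf k) x * (dist xs x - dist (zf k) x) :=
      mul_le_mul_of_nonneg_left hb dist_nonneg
    nlinarith [hgoal, hFneg, hbusneg, mul_lt_mul_of_pos_left h1 hdpos]
  · have hbex : ∃ b : ℝ, ∃ᶠ k in atTop, dist (zf k) x < b := by
      by_contra hall
      push_neg at hall
      apply hT
      rw [tendsto_atTop]
      intro b
      have hb := hall b
      filter_upwards [hb] with k hk
      exact hk
    obtain ⟨b, hbfreq⟩ := hbex
    obtain ⟨φ, hφ, hφlt⟩ := Filter.extraction_of_frequently_atTop hbfreq
    have hKbcmp : IsCompact (Ω ∩ Metric.closedBall x b) :=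
      (isCompact_closedBall x b).inter_left hcl
    obtain ⟨zb, hzbm, ψ, hψ, hconvg⟩ := hKbcmp.tendsto_subseq
      (x := fun k => zf (φ k))
      (fun k => ⟨(hzfK (φ k)).1, Metric.mem_closedBall.mpr (hφlt k).le⟩)
    have hzbΩ : zb ∈ Ω := hzbm.1
    have hconvg' : Tendsto (fun k => zf (φ (ψ k))) atTop (𝓝 zb) := hconvg
    have hgminty : ∀ w ∈ Ω, resG n F lam x w zb ≤ 0 := by
      intro w hw
      refine resG_lsc_seq hlsc hlam hw hzbΩ
        (v := fun k => zf (φ (ψ k))) (fun k => (hzfK _).1) hconvg'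
        (a := fun _ => (0:ℝ)) tendsto_const_nhds ?_
      filter_upwards [eventually_ge_atTop (Nat.ceil (dist w x))] with k hk
      have hwk : w ∈ K (φ (ψ k)) := by
        refine ⟨hw, Metric.mem_closedBall.mpr ?_⟩
        have h1 : dist w x ≤ (Nat.ceil (dist w x) : ℝ) := Nat.le_ceil _
        have h2 : ((Nat.ceil (dist w x) : ℕ) : ℝ) ≤ (k : ℝ) := Nat.cast_le.mpr hk
        have h3 : (k:ℝ) ≤ (ψ k : ℝ) := Nat.cast_le.mpr hψ.le_apply
        have h4 : ((ψ k : ℕ):ℝ) ≤ ((φ (ψ k) : ℕ):ℝ) := Nat.cast_le.mpr hφ.le_apply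
        linarith
      exact hzf (φ (ψ k)) w hwk
    exact ⟨zb, hzbΩ, fun y hy =>
      minty_to_goal (n := n) hdiag hconvf husc hlam hconv subset_rfl hzbΩ hy hgminty⟩

end Main
end
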